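/- arXiv:2007.15788 — 3 statements merged into one kernel-verified Lean document; each statement's English description precedes it below -/
import Mathlib

section
/- For matrices X, X̂ ∈ ℝ^{p×q} where X has rank r with r-th singular value σ_r(X) > 0, if Û⊥ ∈ ℝ^{p×(p-r)} has orthonormal columns orthogonal to the top-r left singular vectors Û of X̂, then ‖Û⊥ᵀ U‖_F ≤ ‖X̂ − X‖_F / σ_r(X), where U ∈ ℝ^{p×r} contains the top-r left singular vectors of X. -/
open Matrix BigOperators

/-- Frobenius norm of a real matrix. -/
noncomputable def frob {m n : Type*} [Fintype m] [Fintype n]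
    (A : Matrix m n ℝ) : ℝ :=
  Real.sqrt (∑ i, ∑ j, (A i j) ^ 2)

noncomputable def frobSq {m n : Type*} [Fintype m] [Fintype n]
    (A : Matrix m n ℝ) : ℝ :=
  ∑ i, ∑ j, (A i j) ^ 2

lemma frob_eq {m n : Type*} [Fintype m] [Fintype n] (A : Matrix m n ℝ) :
    frob A = Real.sqrt (frobSq A) := rfl

lemma frobSq_nonneg {m n : Type*} [Fintype m] [Fintype n] (A : Matrix m n ℝ) :
    0 ≤ frobSq A :=
  Finset.sum_nonneg fun _ _ => Finset.sum_nonneg fun _ _ => sq_nonneg _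

lemma frobSq_eq_trace {m n : Type*} [Fintype m] [Fintype n] (A : Matrix m n ℝ) :
    frobSq A = Matrix.trace (A.transpose * A) := by
  simp only [frobSq, Matrix.trace, Matrix.diag, Matrix.mul_apply,
    Matrix.transpose_apply, sq]
  exact Finset.sum_comm

lemma frobSq_neg {m n : Type*} [Fintype m] [Fintype n] (A : Matrix m n ℝ) :
    frobSq (-A) = frobSq A := by
  simp [frobSq]

lemma contraction {m n k : Type*} [Fintype m] [Fintype n] [Fintype k] [DecidableEq k]
    (V : Matrix m k ℝ) (hV : V.transpose * V = 1) (M : Matrix m n ℝ) :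
    frobSq (V.transpose * M) ≤ frobSq M := by
  have hVz : ∀ Z : Matrix k n ℝ, V.transpose * (V * Z) = Z := by
    intro Z; rw [← Matrix.mul_assoc, hV, Matrix.one_mul]
  have key : (M - V * (V.transpose * M)).transpose * (M - V * (V.transpose * M))
      = M.transpose * M - (V.transpose * M).transpose * (V.transpose * M) := by
    simp only [Matrix.transpose_sub, Matrix.transpose_mul,
      Matrix.transpose_transpose, Matrix.sub_mul, Matrix.mul_sub,
      Matrix.mul_assoc, hVz]
    abel
  have h0 : 0 ≤ frobSq (M - V * (V.transpose * M)) := frobSq_nonneg _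
  rw [frobSq_eq_trace, key, Matrix.trace_sub] at h0
  rw [frobSq_eq_trace, frobSq_eq_trace]
  linarith

/-- If `U Uᵀ X = X` (X has rank r with left singular vectors `U`),
`σ > 0` is a lower bound on the singular values of `Uᵀ X` (i.e. the r-th singular
value of X), `Uhat` contains the top-r left singular vectors of `Xhat`
(so `Uhat Uhatᵀ Xhat = Xhat`), and `Uperp` has orthonormal columns orthogonal to
`Uhat`, then `‖Uperpᵀ U‖_F ≤ ‖Xhat − X‖_F / σ`. -/
theorem stmt0 {p q r : ℕ}
    (X Xhat : Matrix (Fin p) (Fin q) ℝ)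
    (U Uhat : Matrix (Fin p) (Fin r) ℝ)
    (Uperp : Matrix (Fin p) (Fin (p - r)) ℝ)
    (σ : ℝ) (hσ : 0 < σ)
    (hU : U * U.transpose * X = X)
    (hUorth : U.transpose * U = 1)
    (hUhatrank : Uhat * Uhat.transpose * Xhat = Xhat)
    (hperp_orth : Uperp.transpose * Uperp = 1)
    (hperpUhat : Uperp.transpose * Uhat = 0)
    (hσval : ∀ v : Fin r → ℝ,
      σ * Real.sqrt (∑ i, (v i) ^ 2) ≤
        Real.sqrt (∑ j, (Matrix.vecMul v (U.transpose * X) j) ^ 2)) :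
    frob (Uperp.transpose * U) ≤ frob (Xhat - X) / σ := by
  set A := Uperp.transpose * U with hA
  set B := A * (U.transpose * X) with hB
  -- B = Uperpᵀ X
  have hBX : B = Uperp.transpose * X := by
    simp only [hB, hA, Matrix.mul_assoc]
    rw [show U * (U.transpose * X) = X from by rw [← Matrix.mul_assoc, hU]]
  -- Uperpᵀ Xhat = 0
  have hXhat0 : Uperp.transpose * Xhat = 0 := by
    rw [← hUhatrank, ← Matrix.mul_assoc, ← Matrix.mul_assoc, hperpUhat,
      Matrix.zero_mul, Matrix.zero_mul]
  have hBneg : B = -(Uperp.transpose * (Xhat - X)) := by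
    rw [hBX, Matrix.mul_sub, hXhat0, zero_sub, neg_neg]
  -- rowwise lower bound, squared: σ^2 * frobSq A ≤ frobSq B
  have hrow : ∀ i, σ ^ 2 * (∑ j, (A i j) ^ 2) ≤ ∑ j, (B i j) ^ 2 := by
    intro i
    have h := hσval (A i)
    have hs : (0:ℝ) ≤ ∑ j, (A i j) ^ 2 :=
      Finset.sum_nonneg fun _ _ => sq_nonneg _
    have ht : (0:ℝ) ≤ ∑ j, (Matrix.vecMul (A i) (U.transpose * X) j) ^ 2 :=
      Finset.sum_nonneg fun _ _ => sq_nonneg _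
    have hnn : 0 ≤ σ * Real.sqrt (∑ j, (A i j) ^ 2) :=
      mul_nonneg hσ.le (Real.sqrt_nonneg _)
    have hsq := mul_self_le_mul_self hnn h
    have heq : ∀ j, Matrix.vecMul (A i) (U.transpose * X) j = B i j := by
      intro j
      simp [hB, Matrix.mul_apply, Matrix.vecMul, dotProduct]
    calc σ ^ 2 * (∑ j, (A i j) ^ 2)
        = (σ * Real.sqrt (∑ j, (A i j) ^ 2)) * (σ * Real.sqrt (∑ j, (A i j) ^ 2)) := by
          rw [mul_mul_mul_comm, Real.mul_self_sqrt hs]; ring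
      _ ≤ Real.sqrt (∑ j, (Matrix.vecMul (A i) (U.transpose * X) j) ^ 2) *
            Real.sqrt (∑ j, (Matrix.vecMul (A i) (U.transpose * X) j) ^ 2) := hsq
      _ = ∑ j, (Matrix.vecMul (A i) (U.transpose * X) j) ^ 2 := Real.mul_self_sqrt ht
      _ = ∑ j, (B i j) ^ 2 := by simp only [heq]
  have hAB : σ ^ 2 * frobSq A ≤ frobSq B := by
    rw [frobSq, frobSq, Finset.mul_sum]
    exact Finset.sum_le_sum fun i _ => hrow i
  have hcontr : frobSq B ≤ frobSq (Xhat - X) := by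
    rw [hBneg, frobSq_neg]
    exact contraction Uperp hperp_orth (Xhat - X)
  have hmain : σ ^ 2 * frobSq A ≤ frobSq (Xhat - X) := le_trans hAB hcontr
  rw [frob_eq, frob_eq, le_div_iff₀ hσ]
  calc Real.sqrt (frobSq A) * σ = Real.sqrt (σ ^ 2 * frobSq A) := by
        rw [Real.sqrt_mul (sq_nonneg σ), Real.sqrt_sq hσ.le, mul_comm]
    _ ≤ Real.sqrt (frobSq (Xhat - X)) := Real.sqrt_le_sqrt hmain
end

section
/- Let s: ℕ → ℝ_{>0} be a nondecreasing sequence and let n₂ ≥ 1. Define K* = min{K ≥ 1 : Σ_{k=1}^{K} (1 + ⌈s(k)⌉) ≥ n₂} (assume the set is nonempty). Then for every u ∈ {1, ..., n₂} with u ≤ K* − 1, we have K* ≤ u + (n₂ − u)/s(u). -/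
open BigOperators

/-- Let `s : ℕ → ℝ` be a positive nondecreasing sequence, `n₂ ≥ 1`,
and let `K*` be the least `K ≥ 1` with `Σ_{k=1}^{K} (1 + ⌈s(k)⌉) ≥ n₂`. Then
for every `u ∈ {1,...,n₂}` with `u ≤ K* − 1`, we have
`K* ≤ u + (n₂ − u)/s(u)`. -/
theorem stmt6 (s : ℕ → ℝ) (hpos : ∀ k, 0 < s k) (hmono : Monotone s)
    (n₂ : ℕ) (hn₂ : 1 ≤ n₂) (Kstar : ℕ) (hK1 : 1 ≤ Kstar)
    (hKge : (n₂ : ℤ) ≤ ∑ k ∈ Finset.Icc 1 Kstar, (1 + ⌈s k⌉))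
    (hKmin : ∀ K : ℕ, 1 ≤ K →
      (n₂ : ℤ) ≤ (∑ k ∈ Finset.Icc 1 K, (1 + ⌈s k⌉)) → Kstar ≤ K) :
    ∀ u : ℕ, 1 ≤ u → u ≤ n₂ → u ≤ Kstar - 1 →
      (Kstar : ℝ) ≤ u + ((n₂ : ℝ) - u) / s u := by
  intro u hu1 hun huK
  set M := Kstar - 1 with hM
  have hM1 : 1 ≤ M := le_trans hu1 huK
  have hMK : M + 1 = Kstar := Nat.succ_pred_eq_of_pos hK1
  have hMlt : M < Kstar := by omega
  -- minimality: sum up to M is < n₂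
  have hlt : (∑ k ∈ Finset.Icc 1 M, (1 + ⌈s k⌉)) < (n₂ : ℤ) := by
    by_contra h
    push_neg at h
    exact absurd (hKmin M hM1 h) (by omega)
  -- lower bound on the sum
  have hsub : Finset.Icc u M ⊆ Finset.Icc 1 M := Finset.Icc_subset_Icc_left hu1
  have hbound : (M : ℤ) + (M - u + 1) * ⌈s u⌉ ≤ ∑ k ∈ Finset.Icc 1 M, (1 + ⌈s k⌉) := by
    have hsplit : ∑ k ∈ Finset.Icc 1 M, (1 + ⌈s k⌉)
        = (M : ℤ) + ∑ k ∈ Finset.Icc 1 M, ⌈s k⌉ := by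
      rw [Finset.sum_add_distrib, Finset.sum_const, Nat.card_Icc]; simp
    rw [hsplit]
    have h2 : ((M : ℤ) - u + 1) * ⌈s u⌉ ≤ ∑ k ∈ Finset.Icc u M, ⌈s k⌉ := by
      have hs : ∑ k ∈ Finset.Icc u M, ⌈s u⌉ ≤ ∑ k ∈ Finset.Icc u M, ⌈s k⌉ := by
        apply Finset.sum_le_sum
        intro k hk
        exact Int.ceil_le_ceil (hmono (Finset.mem_Icc.mp hk).1)
      rw [Finset.sum_const, Nat.card_Icc, nsmul_eq_mul] at hs
      have hc : ((M + 1 - u : ℕ) : ℤ) = (M : ℤ) - u + 1 := by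
        have : u ≤ M := huK
        omega
      rw [hc] at hs; exact hs
    have h3 : ∑ k ∈ Finset.Icc u M, ⌈s k⌉ ≤ ∑ k ∈ Finset.Icc 1 M, ⌈s k⌉ :=
      Finset.sum_le_sum_of_subset_of_nonneg hsub
        (fun k _ _ => le_of_lt (Int.ceil_pos.mpr (hpos k)))
    linarith
  have hkey : (Kstar : ℤ) + ((Kstar : ℤ) - u) * ⌈s u⌉ ≤ (n₂ : ℤ) := by
    have hKM : (Kstar : ℤ) = (M : ℤ) + 1 := by exact_mod_cast hMK.symm
    have he : ((M : ℤ) - u + 1) * ⌈s u⌉ = ((Kstar : ℤ) - u) * ⌈s u⌉ := by rw [hKM]; ring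
    rw [hKM]; linarith
  -- pass to reals
  have hsu : (0 : ℝ) < s u := hpos u
  have hce : s u ≤ (⌈s u⌉ : ℝ) := Int.le_ceil _
  have huK' : (u : ℝ) ≤ (Kstar : ℝ) := by exact_mod_cast le_of_lt (lt_of_le_of_lt huK hMlt)
  have hkeyR : (Kstar : ℝ) + ((Kstar : ℝ) - u) * (⌈s u⌉ : ℝ) ≤ (n₂ : ℝ) := by
    exact_mod_cast hkey
  have hmul : ((Kstar : ℝ) - u) * s u ≤ ((Kstar : ℝ) - u) * (⌈s u⌉ : ℝ) :=
    mul_le_mul_of_nonneg_left hce (by linarith)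
  have hfin : ((Kstar : ℝ) - u) * s u ≤ (n₂ : ℝ) - u := by
    nlinarith
  have := (le_div_iff₀ hsu).mpr hfin
  linarith
end

section
/- Let Λ = diag(λ₁,...,λ₁, λ₂,...,λ₂) ∈ ℝ^{d×d} with the first q diagonal entries equal to λ₁ > 0 and the remaining d − q entries equal to λ₂ > 0, and let A₁,...,A_n ∈ ℝ^d with ‖A_t‖₂ ≤ 1 for all t. Define V_n = Λ + Σ_{t=1}^n A_t A_tᵀ. If λ₂ = n/(q log(1 + n/λ₁)), then log(det(V_n)/det(Λ)) ≤ 2q log(1 + n/λ₁). -/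
open Matrix BigOperators

open Matrix BigOperators

lemma trace_eq_sum_eigenvalues {ι : Type*} [Fintype ι] [DecidableEq ι]
    {A : Matrix ι ι ℝ} (hA : A.IsHermitian) :
    A.trace = ∑ i, hA.eigenvalues i := by
  rw [Matrix.IsHermitian.trace_eq_sum_eigenvalues hA]
  simp

lemma prod_le_one_of_sum_le_card {ι : Type*} [Fintype ι] {f : ι → ℝ}
    (h0 : ∀ i, 0 ≤ f i) (hs : ∑ i, f i ≤ (Fintype.card ι : ℝ)) :
    ∏ i, f i ≤ 1 := by
  by_cases hall : ∀ i, 0 < f i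
  · have h1 : ∏ i, f i = Real.exp (∑ i, Real.log (f i)) := by
      rw [Real.exp_sum]
      exact (Finset.prod_congr rfl fun i _ => (Real.exp_log (hall i)).symm)
    rw [h1, ← Real.exp_zero]
    apply Real.exp_le_exp.mpr
    calc ∑ i, Real.log (f i) ≤ ∑ i, (f i - 1) :=
          Finset.sum_le_sum fun i _ => Real.log_le_sub_one_of_pos (hall i)
      _ = (∑ i, f i) - (Fintype.card ι : ℝ) := by
          rw [Finset.sum_sub_distrib]; simp [Finset.card_univ]
      _ ≤ 0 := by linarith
  · push_neg at hall
    obtain ⟨i, hi⟩ := hall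
    have : f i = 0 := le_antisymm hi (h0 i)
    rw [Finset.prod_eq_zero (Finset.mem_univ i) this]
    norm_num

/-- Hadamard's inequality for positive definite real matrices. -/
lemma det_le_prod_diag {ι : Type*} [Fintype ι] [DecidableEq ι]
    {V : Matrix ι ι ℝ} (hV : V.PosDef) : V.det ≤ ∏ i, V i i := by
  have hdiag : ∀ i, 0 < V i i := by
    intro i
    exact hV.diag_pos
  set D : Matrix ι ι ℝ := diagonal (fun i => (Real.sqrt (V i i))⁻¹) with hD
  have hDherm : Dᴴ = D := by
    simp [hD, diagonal_conjTranspose]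
  have hB : (D * V * D).PosSemidef := by
    have := hV.posSemidef.conjTranspose_mul_mul_same D
    rwa [hDherm] at this
  have hBdiag : ∀ i, (D * V * D) i i = 1 := by
    intro i
    rw [Matrix.mul_diagonal, Matrix.diagonal_mul]
    have h := Real.mul_self_sqrt (hdiag i).le
    have hs : Real.sqrt (V i i) ≠ 0 := ne_of_gt (Real.sqrt_pos.mpr (hdiag i))
    field_simp
    rw [Real.sq_sqrt (hdiag i).le]
  -- trace of B equals card
  have htr : (D * V * D).trace = (Fintype.card ι : ℝ) := by
    rw [Matrix.trace]
    simp only [Matrix.diag_apply]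
    rw [Finset.sum_congr rfl fun i _ => hBdiag i]
    simp [Finset.card_univ]
  have hsum : ∑ i, hB.1.eigenvalues i = (Fintype.card ι : ℝ) := by
    rw [← trace_eq_sum_eigenvalues hB.1, htr]
  have hprod : (D * V * D).det = ∏ i, hB.1.eigenvalues i := by
    have := hB.1.det_eq_prod_eigenvalues
    simpa using this
  have hdetB : (D * V * D).det ≤ 1 := by
    rw [hprod]
    exact prod_le_one_of_sum_le_card (fun i => hB.eigenvalues_nonneg i) (le_of_eq hsum)
  have hdetD : D.det = ∏ i, (Real.sqrt (V i i))⁻¹ := by rw [hD, det_diagonal]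
  have hdetDpos : 0 < D.det := by
    rw [hdetD]
    exact Finset.prod_pos fun i _ => inv_pos.mpr (Real.sqrt_pos.mpr (hdiag i))
  have hexp : (D * V * D).det = D.det * V.det * D.det := by rw [det_mul, det_mul]
  rw [hexp] at hdetB
  have hP : (0:ℝ) < ∏ i, V i i := Finset.prod_pos fun i _ => hdiag i
  have hDD : D.det * D.det = (∏ i, V i i)⁻¹ := by
    rw [hdetD, ← Finset.prod_mul_distrib, ← Finset.prod_inv_distrib]
    exact Finset.prod_congr rfl fun i _ => by
      rw [← mul_inv, Real.mul_self_sqrt (hdiag i).le]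
  have h2 : (∏ i, V i i)⁻¹ * V.det ≤ 1 := by
    rw [← hDD]
    linarith [hdetB, (by ring : D.det * D.det * V.det = D.det * V.det * D.det)]
  have h3 := mul_le_mul_of_nonneg_left h2 hP.le
  rw [← mul_assoc, mul_inv_cancel₀ hP.ne', one_mul, mul_one] at h3
  exact h3

lemma posSemidef_vecMulVec_self {m : Type*} [Fintype m] (a : m → ℝ) :
    (Matrix.vecMulVec a a).PosSemidef := by
  refine Matrix.posSemidef_iff_dotProduct_mulVec.mpr ⟨?_, ?_⟩
  · ext i j
    simp [Matrix.vecMulVec_apply, Matrix.conjTranspose_apply, mul_comm]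
  · intro x
    have hmv : Matrix.vecMulVec a a *ᵥ x = fun i => a i * (a ⬝ᵥ x) := by
      ext i
      simp [Matrix.mulVec, Matrix.vecMulVec_apply, dotProduct, Finset.mul_sum, mul_assoc]
    rw [hmv]
    have : star x ⬝ᵥ (fun i => a i * (a ⬝ᵥ x)) = (a ⬝ᵥ x) * (a ⬝ᵥ x) := by
      simp only [dotProduct, Pi.star_apply, star_trivial]
      rw [Finset.sum_mul]
      exact Finset.sum_congr rfl fun j _ => by ring
    rw [this]
    exact mul_self_nonneg _


/-- Let `Λ = diag(λ₁,...,λ₁, λ₂,...,λ₂)` with the first `q`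
entries `λ₁ > 0` and the remaining `d − q` entries
`λ₂ = n/(q log(1 + n/λ₁))`, and let `A₁,...,A_n` have Euclidean norm at most 1.
Then for `V_n = Λ + Σ_t A_t A_tᵀ`,
`log(det(V_n)/det(Λ)) ≤ 2 q log(1 + n/λ₁)`. -/
theorem stmt11 {d n q : ℕ} (hq1 : 1 ≤ q) (hqd : q ≤ d) (hn : 1 ≤ n)
    (l1 l2 : ℝ) (hl1 : 0 < l1)
    (hl2 : l2 = (n : ℝ) / (q * Real.log (1 + (n : ℝ) / l1)))
    (A : Fin n → (Fin d → ℝ))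
    (hA : ∀ t, ∑ i, (A t i) ^ 2 ≤ 1)
    (Λ : Matrix (Fin d) (Fin d) ℝ)
    (hΛ : Λ = Matrix.diagonal (fun i : Fin d => if (i : ℕ) < q then l1 else l2)) :
    Real.log ((Λ + ∑ t, Matrix.vecMulVec (A t) (A t)).det / Λ.det) ≤
      2 * q * Real.log (1 + (n : ℝ) / l1) := by
  set L : ℝ := Real.log (1 + (n : ℝ) / l1) with hLdef
  have hnpos : (0:ℝ) < (n:ℝ) := by exact_mod_cast hn
  have hqpos : (0:ℝ) < (q:ℝ) := by exact_mod_cast hq1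
  have hL : 0 < L := Real.log_pos (by nlinarith [div_pos hnpos hl1])
  have hl2pos : 0 < l2 := by rw [hl2]; exact div_pos hnpos (by positivity)
  set S : Matrix (Fin d) (Fin d) ℝ := ∑ t, Matrix.vecMulVec (A t) (A t) with hSdef
  have hS : S.PosSemidef := by
    rw [hSdef]
    exact Finset.sum_induction _ _ (fun a b ha hb => ha.add hb) Matrix.PosSemidef.zero
      (fun t _ => posSemidef_vecMulVec_self (A t))
  have hΛpd : Λ.PosDef := by
    rw [hΛ]
    refine Matrix.PosDef.diagonal fun i => ?_
    by_cases h : (i:ℕ) < q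
    · simpa [h] using hl1
    · simpa [h] using hl2pos
  have hVpd : (Λ + S).PosDef := hΛpd.add_posSemidef hS
  -- diagonal entries of S
  have hSdiag : ∀ i, S i i = ∑ t, (A t i) ^ 2 := by
    intro i
    rw [hSdef, Matrix.sum_apply]
    exact Finset.sum_congr rfl fun t _ => by rw [Matrix.vecMulVec_apply, sq]
  have hSnn : ∀ i, 0 ≤ S i i := fun i => by
    rw [hSdiag]; exact Finset.sum_nonneg fun t _ => sq_nonneg _
  have hSle : ∀ i, S i i ≤ (n:ℝ) := by
    intro i
    rw [hSdiag]
    calc ∑ t, (A t i) ^ 2 ≤ ∑ t : Fin n, (1:ℝ) := by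
          refine Finset.sum_le_sum fun t _ => ?_
          calc (A t i) ^ 2 ≤ ∑ j, (A t j) ^ 2 :=
                Finset.single_le_sum (f := fun j => (A t j) ^ 2)
                  (fun j _ => sq_nonneg _) (Finset.mem_univ i)
            _ ≤ 1 := hA t
      _ = (n:ℝ) := by simp
  have hStot : ∑ i, S i i ≤ (n:ℝ) := by
    calc ∑ i, S i i = ∑ t, ∑ i, (A t i) ^ 2 := by
          rw [Finset.sum_congr rfl fun i _ => hSdiag i, Finset.sum_comm]
      _ ≤ ∑ t : Fin n, (1:ℝ) := Finset.sum_le_sum fun t _ => hA t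
      _ = (n:ℝ) := by simp
  have hΛdiag : ∀ i : Fin d, Λ i i = if (i:ℕ) < q then l1 else l2 := by
    intro i; rw [hΛ, Matrix.diagonal_apply_eq]
  have hΛdpos : ∀ i : Fin d, 0 < Λ i i := by
    intro i; rw [hΛdiag]; split <;> assumption
  have hVdpos : ∀ i : Fin d, 0 < (Λ + S) i i := by
    intro i
    have : (Λ + S) i i = Λ i i + S i i := rfl
    rw [this]
    exact add_pos_of_pos_of_nonneg (hΛdpos i) (hSnn i)
  have hdetΛ : Λ.det = ∏ i, Λ i i := by
    rw [hΛ, Matrix.det_diagonal]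
    exact Finset.prod_congr rfl fun i _ =>
      (Matrix.diagonal_apply_eq (fun i : Fin d => if (i:ℕ) < q then l1 else l2) i).symm
  have hdetΛpos : 0 < Λ.det := hΛpd.det_pos
  have hdetVpos : 0 < (Λ + S).det := hVpd.det_pos
  -- card of the filter
  have hcard : (Finset.univ.filter fun i : Fin d => (i:ℕ) < q).card = q := by
    have heq : (Finset.univ.filter fun i : Fin d => (i:ℕ) < q)
        = Finset.map (Fin.castLEEmb hqd) Finset.univ := by
      ext i
      simp only [Finset.mem_filter, Finset.mem_univ, true_and, Finset.mem_map]
      constructor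
      · intro h
        exact ⟨⟨(i:ℕ), h⟩, Fin.ext rfl⟩
      · rintro ⟨a, rfl⟩
        simp only [Fin.castLEEmb_apply, Fin.coe_castLE]; exact a.isLt
    rw [heq, Finset.card_map, Finset.card_univ, Fintype.card_fin]
  -- key chain
  have step1 : Real.log ((Λ + S).det / Λ.det)
      ≤ ∑ i, Real.log ((Λ + S) i i / Λ i i) := by
    rw [Real.log_div hdetVpos.ne' hdetΛpos.ne']
    have h1 : Real.log (Λ + S).det ≤ Real.log (∏ i, (Λ + S) i i) :=
      Real.log_le_log hdetVpos (det_le_prod_diag hVpd)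
    have h2 : Real.log (∏ i, (Λ + S) i i) = ∑ i, Real.log ((Λ + S) i i) :=
      Real.log_prod fun i _ => (hVdpos i).ne'
    have h3 : Real.log Λ.det = ∑ i, Real.log (Λ i i) := by
      rw [hdetΛ]
      exact Real.log_prod fun i _ => (hΛdpos i).ne'
    have h4 : Real.log (Λ + S).det - Real.log Λ.det
        ≤ ∑ i, (Real.log ((Λ + S) i i) - Real.log (Λ i i)) := by
      rw [Finset.sum_sub_distrib]
      linarith
    refine h4.trans (le_of_eq ?_)
    exact Finset.sum_congr rfl fun i _ =>
      (Real.log_div (hVdpos i).ne' (hΛdpos i).ne').symm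
  have step2 : ∑ i, Real.log ((Λ + S) i i / Λ i i)
      ≤ ∑ i : Fin d, (if (i:ℕ) < q then L else S i i / l2) := by
    refine Finset.sum_le_sum fun i _ => ?_
    have hentry : (Λ + S) i i / Λ i i = 1 + S i i / Λ i i := by
      rw [Matrix.add_apply]
      field_simp [(hΛdpos i).ne']
    rw [hentry]
    by_cases hi : (i:ℕ) < q
    · rw [if_pos hi]
      have hΛi : Λ i i = l1 := by rw [hΛdiag, if_pos hi]
      rw [hΛi, hLdef]
      have hpos : (0:ℝ) < 1 + S i i / l1 := by
        have := div_nonneg (hSnn i) hl1.le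
        linarith
      apply Real.log_le_log hpos
      have := hSle i
      gcongr
    · rw [if_neg hi]
      have hΛi : Λ i i = l2 := by rw [hΛdiag, if_neg hi]
      rw [hΛi]
      have hpos : (0:ℝ) < 1 + S i i / l2 := by
        have := div_nonneg (hSnn i) hl2pos.le
        linarith
      have h := Real.log_le_sub_one_of_pos hpos
      linarith
  have step3 : ∑ i : Fin d, (if (i:ℕ) < q then L else S i i / l2)
      ≤ 2 * q * L := by
    rw [Finset.sum_ite]
    have hA1 : ∑ _i ∈ (Finset.univ.filter fun i : Fin d => (i:ℕ) < q), L = q * L := by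
      rw [Finset.sum_const, hcard, nsmul_eq_mul]
    have hA2 : ∑ i ∈ (Finset.univ.filter fun i : Fin d => ¬ (i:ℕ) < q), S i i / l2
        ≤ q * L := by
      calc ∑ i ∈ (Finset.univ.filter fun i : Fin d => ¬ (i:ℕ) < q), S i i / l2
          ≤ ∑ i : Fin d, S i i / l2 := by
            refine Finset.sum_le_sum_of_subset_of_nonneg (Finset.filter_subset _ _)
              fun i _ _ => div_nonneg (hSnn i) hl2pos.le
        _ = (∑ i, S i i) / l2 := by rw [Finset.sum_div]
        _ ≤ (n:ℝ) / l2 := by gcongr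
        _ = q * L := by
            rw [hl2, div_div_eq_mul_div, mul_comm, mul_div_assoc,
              div_self hnpos.ne', mul_one]
    linarith
  calc Real.log ((Λ + S).det / Λ.det) ≤ _ := step1
    _ ≤ _ := step2
    _ ≤ 2 * q * L := step3
end
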